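/- arXiv:1509.08328 — 5 statements merged into one kernel-verified Lean document; each statement's English description precedes it below -/
import Mathlib

section
/- If (V₁, V₂) solve V₁'' = V₂² V₁, V₂'' = V₁² V₂ on ℝ, then the pair (x V₁' + V₁, x V₂' + V₂) lies in the kernel of the linearized operator L: that is, setting E₁ = x V₁' + V₁ and E₂ = x V₂' + V₂, one has -E₁'' + V₂² E₁ + 2 V₁ V₂ E₂ = 0 and -E₂'' + V₁² E₂ + 2 V₁ V₂ E₁ = 0. -/
lemma aux_key (V W : ℝ → ℝ)
    (hV : ContDiff ℝ 3 V) (hW : ContDiff ℝ 3 W)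
    (heq : ∀ x, deriv (deriv V) x = (W x)^2 * V x)
    (E F : ℝ → ℝ)
    (hE : ∀ x, E x = x * deriv V x + V x)
    (hF : ∀ x, F x = x * deriv W x + W x) :
    ∀ x, -(deriv (deriv E) x) + (W x)^2 * E x + 2 * V x * W x * F x = 0 := by
  have hV1 : Differentiable ℝ V := hV.differentiable (by norm_num)
  have hVd : ContDiff ℝ 2 (deriv V) :=
    (contDiff_succ_iff_deriv.mp (by norm_num; exact hV : ContDiff ℝ (2 + 1) V)).2.2
  have hVd1 : Differentiable ℝ (deriv V) := hVd.differentiable (by norm_num)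
  have hW1 : Differentiable ℝ W := hW.differentiable (by norm_num)
  have hWd : ContDiff ℝ 2 (deriv W) :=
    (contDiff_succ_iff_deriv.mp (by norm_num; exact hW : ContDiff ℝ (2 + 1) W)).2.2
  have hWd1 : Differentiable ℝ (deriv W) := hWd.differentiable (by norm_num)
  -- third derivative of V
  have hVdd : deriv (deriv V) = fun z => (W z)^2 * V z := funext heq
  have d4 : ∀ y, HasDerivAt (deriv (deriv V))
      (2 * W y * deriv W y * V y + (W y)^2 * deriv V y) y := by
    intro y
    rw [hVdd]
    have h1 : HasDerivAt (fun z => (W z)^2) (2 * W y * deriv W y) y := by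
      have := ((hW1 y).hasDerivAt.fun_pow 2)
      simpa [mul_comm, mul_assoc, mul_left_comm] using this
    simpa [mul_comm, mul_assoc, mul_left_comm] using h1.fun_mul (hV1 y).hasDerivAt
  have hEeq : E = fun x => x * deriv V x + V x := funext hE
  have d1 : ∀ y, HasDerivAt E (2 * deriv V y + y * deriv (deriv V) y) y := by
    intro y
    rw [hEeq]
    have : HasDerivAt (fun x => x * deriv V x + V x) (1 * deriv V y + y * deriv (deriv V) y + deriv V y) y := ((hasDerivAt_id' y).fun_mul (hVd1 y).hasDerivAt).fun_add (hV1 y).hasDerivAt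
    convert this using 1
    ring
  have dE : deriv E = fun y => 2 * deriv V y + y * deriv (deriv V) y :=
    funext fun y => (d1 y).deriv
  have d3 : ∀ y, deriv (deriv E) y =
      3 * deriv (deriv V) y + y * (2 * W y * deriv W y * V y + (W y)^2 * deriv V y) := by
    intro y
    rw [dE]
    have h1 : HasDerivAt (fun z => 2 * deriv V z + z * deriv (deriv V) z)
        (2 * deriv (deriv V) y + (1 * deriv (deriv V) y + y * (2 * W y * deriv W y * V y + (W y)^2 * deriv V y))) y := by
      exact (((hVd1 y).hasDerivAt.const_mul 2).add ((hasDerivAt_id y).mul (d4 y)))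
    rw [h1.deriv]; ring
  intro x
  rw [d3, heq, hE, hF]
  ring

theorem stmt_9 (V₁ V₂ : ℝ → ℝ)
    (hV₁ : ContDiff ℝ 3 V₁) (hV₂ : ContDiff ℝ 3 V₂)
    (heq₁ : ∀ x, deriv (deriv V₁) x = (V₂ x)^2 * V₁ x)
    (heq₂ : ∀ x, deriv (deriv V₂) x = (V₁ x)^2 * V₂ x)
    (E₁ E₂ : ℝ → ℝ)
    (hE₁ : ∀ x, E₁ x = x * deriv V₁ x + V₁ x)
    (hE₂ : ∀ x, E₂ x = x * deriv V₂ x + V₂ x) :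
    (∀ x, -(deriv (deriv E₁) x) + (V₂ x)^2 * E₁ x + 2 * V₁ x * V₂ x * E₂ x = 0) ∧
    (∀ x, -(deriv (deriv E₂) x) + (V₁ x)^2 * E₂ x + 2 * V₁ x * V₂ x * E₁ x = 0) := by
  exact ⟨aux_key V₁ V₂ hV₁ hV₂ heq₁ E₁ E₂ hE₁ hE₂,
    fun x => by have := aux_key V₂ V₁ hV₂ hV₁ heq₂ E₂ E₁ hE₂ hE₁ x; linarith [this]⟩
end

section
/- Suppose u, q : [x₀, ∞) → ℝ are smooth, q(x) → +∞ as x → +∞, u has at most polynomial growth, and -u'' + q u = f where |f(x)| ≤ C e^{-c₀ x} for some c₀, C > 0. Then there exist C₁, x₁ such that |u(x)| ≤ C₁ e^{-c₀ x} for all x ≥ x₁. -/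
open Filter Real Set Topology

lemma myaux (x₀ x₁ c₀ C K : ℝ) (hc₀ : 0 < c₀) (hC : 0 ≤ C)
    (u q f : ℝ → ℝ)
    (hx₁ : x₀ < x₁)
    (hu : ContDiffOn ℝ 2 u (Set.Ici x₀))
    (hq : ∀ x ≥ x₁, c₀^2 + 1 ≤ q x)
    (heq : ∀ x ≥ x₀, -(deriv (deriv u) x) + q x * u x = f x)
    (hf : ∀ x ≥ x₀, f x ≤ C * Real.exp (-c₀*x))
    (hK : C ≤ K)
    (hK1 : u x₁ ≤ K * Real.exp (-c₀ * x₁))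
    (hbound : ∀ ε > 0, ∃ R, ∀ x ≥ R, u x ≤ ε * Real.exp (c₀ * x)) :
    ∀ b ≥ x₁, u b ≤ K * Real.exp (-c₀ * b) := by
  have hK0 : 0 ≤ K := hC.trans hK
  intro b hb
  -- reduce to ε-perturbed bound
  have key : ∀ ε > (0:ℝ), u b ≤ K * Real.exp (-c₀*b) + ε * Real.exp (c₀*b) := by
    intro ε hε
    by_contra hcon
    push_neg at hcon
    set w : ℝ → ℝ := fun x => u x - K * Real.exp (-c₀*x) - ε * Real.exp (c₀*x) with hw
    have hwb : 0 < w b := by simp only [hw]; linarith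
    obtain ⟨R₀, hR₀⟩ := hbound ε hε
    set R : ℝ := max R₀ b + 1 with hR
    have hbR : b ≤ R := by have := le_max_right R₀ b; linarith
    have hx₁R : x₁ ≤ R := hb.trans hbR
    have hwR : ∀ x ≥ R, w x ≤ 0 := by
      intro x hx
      have h1 : u x ≤ ε * Real.exp (c₀*x) := hR₀ x (by have := le_max_left R₀ b; linarith)
      have h2 : 0 < Real.exp (-c₀*x) := Real.exp_pos _
      simp only [hw]
      nlinarith
    -- continuity of w on Ici x₀
    have hwcont : ContinuousOn w (Set.Ici x₀) := by
      apply ((hu.continuousOn).sub (Continuous.continuousOn (by fun_prop))).sub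
        (Continuous.continuousOn (by fun_prop))
    -- max on compact
    obtain ⟨a, haIcc, hamax⟩ := IsCompact.exists_isMaxOn (isCompact_Icc (a := x₁) (b := R))
      (Set.nonempty_Icc.mpr hx₁R) (hwcont.mono (fun y hy => le_of_lt (lt_of_lt_of_le hx₁ hy.1)))
    have hwa : 0 < w a := lt_of_lt_of_le hwb (hamax ⟨hb, hbR⟩)
    have hax₁ : x₁ < a := by
      rcases lt_or_eq_of_le haIcc.1 with h | h
      · exact h
      · exfalso
        have : w x₁ ≤ 0 := by
          have h2 : 0 < Real.exp (c₀*x₁) := Real.exp_pos _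
          simp only [hw]; nlinarith
        rw [h] at this; linarith
    have haR : a < R := by
      rcases lt_or_eq_of_le haIcc.2 with h | h
      · exact h
      · exfalso; have := hwR R le_rfl; rw [← h] at this; linarith
    have hax₀ : x₀ < a := hx₁.trans hax₁
    -- a is a local max
    have hloc : IsLocalMax w a := hamax.isLocalMax (Icc_mem_nhds hax₁ haR)
    -- derivative of w on Ioi x₀
    set g : ℝ → ℝ := fun x => deriv u x + K * (c₀ * Real.exp (-c₀*x)) - ε * (c₀ * Real.exp (c₀*x)) with hg
    have hwderiv : ∀ x ∈ Set.Ioi x₀, HasDerivAt w (g x) x := by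
      intro x hx
      have hud : HasDerivAt u (deriv u x) x :=
        (((hu.contDiffAt (Ici_mem_nhds hx)).differentiableAt (by norm_num))).hasDerivAt
      have h1 := (((hasDerivAt_id x).const_mul (-c₀)).exp).const_mul K
      simp only [id_eq, mul_one] at h1
      have h2 := (((hasDerivAt_id x).const_mul c₀).exp).const_mul ε
      simp only [id_eq, mul_one] at h2
      have := (hud.sub h1).sub h2
      convert this using 1
      all_goals first | rfl | ring
    -- second derivative stuff at a
    have hdu : ContDiffOn ℝ 1 (deriv u) (Set.Ioi x₀) :=
      (hu.mono Set.Ioi_subset_Ici_self).deriv_of_isOpen isOpen_Ioi (by norm_num)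
    have hdud : DifferentiableAt ℝ (deriv u) a :=
      (hdu.differentiableOn (by norm_num)).differentiableAt (isOpen_Ioi.mem_nhds hax₀)
    have hgd : HasDerivAt g (deriv (deriv u) a - K * (c₀^2 * Real.exp (-c₀*a))
        - ε * (c₀^2 * Real.exp (c₀*a))) a := by
      have h1 := ((((hasDerivAt_id a).const_mul (-c₀)).exp).const_mul c₀).const_mul K
      simp only [id_eq, mul_one] at h1
      have h2 := ((((hasDerivAt_id a).const_mul c₀).exp).const_mul c₀).const_mul ε
      simp only [id_eq, mul_one] at h2
      have := (hdud.hasDerivAt.add h1).sub h2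
      convert this using 1
      all_goals first | rfl | ring
    -- deriv w a = 0
    have hga : g a = 0 := by
      have := (hwderiv a hax₀).deriv
      rw [← this]
      exact hloc.deriv_eq_zero
    -- the second derivative of w at a is positive
    have hE1 : 0 < Real.exp (-c₀*a) := Real.exp_pos _
    have hE2 : 0 < Real.exp (c₀*a) := Real.exp_pos _
    have hqa : c₀^2 + 1 ≤ q a := hq a hax₁.le
    have hfa : f a ≤ C * Real.exp (-c₀*a) := hf a hax₀.le
    have hua : K * Real.exp (-c₀*a) + ε * Real.exp (c₀*a) < u a := by
      have := hwa; simp only [hw] at this; linarith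
    have heqa := heq a hax₀.le
    have hGpos : 0 < deriv (deriv u) a - K * (c₀^2 * Real.exp (-c₀*a))
        - ε * (c₀^2 * Real.exp (c₀*a)) := by
      have hdda : deriv (deriv u) a = q a * u a - f a := by linarith
      rw [hdda]
      nlinarith [mul_le_mul_of_nonneg_right hqa (le_of_lt (lt_of_le_of_lt (by positivity) hua)),
        mul_lt_mul_of_pos_left hua (show (0:ℝ) < q a by nlinarith)]
    -- g is positive just to the right of a
    have hslope := hasDerivAt_iff_tendsto_slope.mp hgd
    have hev : ∀ᶠ x in 𝓝[>] a, 0 < g x := by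
      have h1 : ∀ᶠ x in 𝓝[≠] a, 0 < slope g a x := hslope.eventually (eventually_gt_nhds hGpos)
      have h2 : ∀ᶠ x in 𝓝[>] a, 0 < slope g a x :=
        h1.filter_mono (nhdsWithin_mono a (fun y hy => ne_of_gt hy))
      filter_upwards [h2, self_mem_nhdsWithin] with x hx hx'
      have hxa : 0 < x - a := sub_pos.mpr hx'
      rw [slope_def_field] at hx
      have := mul_pos hx hxa
      rw [div_mul_cancel₀ _ (ne_of_gt hxa)] at this
      rw [hga] at this; linarith
    obtain ⟨u', hu', hIoo⟩ := mem_nhdsGT_iff_exists_Ioo_subset.mp hev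
    obtain ⟨η, hη, hball⟩ := Metric.eventually_nhds_iff.mp hloc
    set t : ℝ := min u' (a + η) with ht
    have hat : a < t := lt_min hu' (by linarith)
    set m : ℝ := (a + t)/2 with hm
    have ham : a < m := by simp only [hm]; linarith
    have hmt : m < t := by simp only [hm]; linarith
    -- strict mono on [a, m]
    have hmono : StrictMonoOn w (Set.Icc a m) := by
      apply strictMonoOn_of_deriv_pos (convex_Icc a m)
        (hwcont.mono (fun y hy => le_trans hax₀.le hy.1))
      intro y hy
      rw [interior_Icc] at hy
      rw [(hwderiv y (lt_trans hax₀ hy.1)).deriv]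
      exact hIoo ⟨hy.1, lt_of_lt_of_le (lt_of_lt_of_le hy.2 hmt.le) (min_le_left _ _)⟩
    have h1 : w a < w m := hmono (Set.left_mem_Icc.mpr ham.le) ⟨ham.le, le_rfl⟩ ham
    have h2 : w m ≤ w a := by
      apply hball
      have : m - a < η := by
        have : t ≤ a + η := min_le_right _ _
        simp only [hm]; linarith
      rw [Real.dist_eq, abs_of_pos (sub_pos.mpr ham)]; exact this
    linarith
  -- take ε → 0
  have : ∀ ε > (0:ℝ), u b ≤ K * Real.exp (-c₀*b) + ε := by
    intro ε hε
    have h2 : 0 < Real.exp (c₀*b) := Real.exp_pos _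
    have := key (ε / Real.exp (c₀*b)) (by positivity)
    rwa [div_mul_cancel₀ _ (ne_of_gt h2)] at this
  exact le_of_forall_pos_le_add this
theorem stmt_12 (x₀ c₀ C : ℝ) (N : ℕ) (hc₀ : 0 < c₀) (hC : 0 < C)
    (u q f : ℝ → ℝ)
    (hu : ContDiffOn ℝ 2 u (Set.Ici x₀))
    (hq : ContinuousOn q (Set.Ici x₀))
    (hqtop : Tendsto q atTop atTop)
    (hugrowth : ∀ x ≥ x₀, |u x| ≤ C * (1 + x)^N)
    (heq : ∀ x ≥ x₀, -(deriv (deriv u) x) + q x * u x = f x)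
    (hf : ∀ x ≥ x₀, |f x| ≤ C * Real.exp (-c₀ * x)) :
    ∃ C₁ x₁ : ℝ, ∀ x ≥ x₁, |u x| ≤ C₁ * Real.exp (-c₀ * x) := by
  -- choose x₁ with q large beyond x₁
  obtain ⟨x₁', hx₁'⟩ := (hqtop.eventually_ge_atTop (c₀^2 + 1)).exists_forall_of_atTop
  set x₁ : ℝ := max x₁' (x₀ + 1) with hx₁def
  have hx₁ : x₀ < x₁ := lt_of_lt_of_le (by linarith) (le_max_right _ _)
  have hq' : ∀ x ≥ x₁, c₀^2 + 1 ≤ q x := fun x hx => hx₁' x (le_trans (le_max_left _ _) hx)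
  -- choose K
  set K : ℝ := C + |u x₁| * Real.exp (c₀ * x₁) with hKdef
  have hexp1 : Real.exp (c₀ * x₁) * Real.exp (-c₀ * x₁) = 1 := by
    rw [← Real.exp_add]; ring_nf; exact Real.exp_zero
  have hK : C ≤ K := by
    have : 0 ≤ |u x₁| * Real.exp (c₀ * x₁) := by positivity
    linarith
  have hK1 : |u x₁| ≤ K * Real.exp (-c₀ * x₁) := by
    have h1 : 0 < Real.exp (-c₀ * x₁) := Real.exp_pos _
    have : K * Real.exp (-c₀ * x₁) = C * Real.exp (-c₀ * x₁) + |u x₁| := by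
      rw [hKdef, add_mul, mul_assoc, hexp1, mul_one]
    nlinarith
  -- polynomial growth beaten by exponential
  have hgen : ∀ ε > (0:ℝ), ∃ R, ∀ x ≥ R, |u x| ≤ ε * Real.exp (c₀ * x) := by
    intro ε hε
    have h0 : Tendsto (fun y : ℝ => y^N * Real.exp (-y)) atTop (nhds 0) :=
      Real.tendsto_pow_mul_exp_neg_atTop_nhds_zero N
    have h1 : Tendsto (fun x : ℝ => (c₀*x)^N * Real.exp (-(c₀*x))) atTop (nhds 0) :=
      h0.comp (Tendsto.const_mul_atTop hc₀ tendsto_id)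
    set δ : ℝ := ε * c₀^N / (C * 2^N + 1) with hδdef
    have hδpos : 0 < δ := by positivity
    have h2 : ∀ᶠ x in atTop, (c₀*x)^N * Real.exp (-(c₀*x)) < δ :=
      h1.eventually (eventually_lt_nhds hδpos)
    obtain ⟨R₀, hR₀⟩ := eventually_atTop.mp h2
    refine ⟨max R₀ (max 1 x₀), fun x hx => ?_⟩
    have hx1 : (1:ℝ) ≤ x := le_trans (le_trans (le_max_left _ _) (le_max_right _ _)) hx
    have hxx₀ : x₀ ≤ x := le_trans (le_trans (le_max_right _ _) (le_max_right _ _)) hx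
    have hlt := hR₀ x (le_trans (le_max_left _ _) hx)
    have hE : 0 < Real.exp (c₀*x) := Real.exp_pos _
    have h3 : c₀^N * x^N < δ * Real.exp (c₀*x) := by
      rw [Real.exp_neg] at hlt
      have := mul_lt_mul_of_pos_right hlt hE
      rw [mul_assoc, inv_mul_cancel₀ (ne_of_gt hE), mul_one, mul_pow] at this
      linarith
    have h4 : |u x| ≤ C * (2^N * x^N) := by
      have := hugrowth x hxx₀
      have hpow : (1+x)^N ≤ (2*x)^N :=
        pow_le_pow_left₀ (by linarith) (by linarith) N
      rw [mul_pow] at hpow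
      nlinarith
    have h5 : δ * (C * 2^N + 1) = ε * c₀^N := by
      rw [hδdef]; field_simp
    have hcN : 0 < c₀^N := by positivity
    have h6 : C * (2^N * x^N) ≤ ε * Real.exp (c₀*x) := by
      rw [← mul_le_mul_iff_right₀ hcN]
      nlinarith [mul_le_mul_of_nonneg_left h3.le (by positivity : (0:ℝ) ≤ C * 2^N),
        mul_nonneg hδpos.le hE.le]
    linarith
  have hbound_u : ∀ ε > (0:ℝ), ∃ R, ∀ x ≥ R, u x ≤ ε * Real.exp (c₀ * x) := by
    intro ε hε; obtain ⟨R, hR⟩ := hgen ε hε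
    exact ⟨R, fun x hx => le_trans (le_abs_self _) (hR x hx)⟩
  have hbound_nu : ∀ ε > (0:ℝ), ∃ R, ∀ x ≥ R, -u x ≤ ε * Real.exp (c₀ * x) := by
    intro ε hε; obtain ⟨R, hR⟩ := hgen ε hε
    exact ⟨R, fun x hx => le_trans (neg_le_abs _) (hR x hx)⟩
  -- apply aux to u
  have habs : ∀ x, -(K * Real.exp (-c₀ * x)) ≤ u x ∧ u x ≤ K * Real.exp (-c₀ * x) → |u x| ≤ K * Real.exp (-c₀ * x) :=
    fun x h => abs_le.mpr h
  have hb1 : ∀ b ≥ x₁, u b ≤ K * Real.exp (-c₀ * b) := by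
    apply myaux x₀ x₁ c₀ C K hc₀ hC.le u q f hx₁ hu hq' heq
      (fun x hx => le_trans (le_abs_self _) (hf x hx)) hK
      (le_trans (le_abs_self _) hK1) hbound_u
  -- apply aux to -u
  have hderivneg : deriv (deriv (fun y => -u y)) = fun x => -(deriv (deriv u) x) := by
    have h1 : deriv (fun y => -u y) = fun y => -(deriv u y) := funext fun y => deriv.neg
    rw [h1]
    exact funext fun x => deriv.neg
  have hb2 : ∀ b ≥ x₁, -u b ≤ K * Real.exp (-c₀ * b) := by
    apply myaux x₀ x₁ c₀ C K hc₀ hC.le (fun y => -u y) q (fun y => -f y) hx₁ hu.neg hq'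
    · intro x hx
      rw [hderivneg]
      have := heq x hx
      simp only
      linarith
    · exact fun x hx => le_trans (neg_le_abs _) (hf x hx)
    · exact hK
    · exact le_trans (neg_le_abs _) hK1
    · exact hbound_nu
  exact ⟨K, x₁, fun x hx => abs_le.mpr ⟨by linarith [hb2 x hx], hb1 x hx⟩⟩
end

section
/- Suppose u, q : [x₀, ∞) → ℝ are smooth with |q(x)| ≤ C e^{-c₀ x}, and -u'' + q u = f with |f(x)| ≤ C e^{-c₀ x} for some c₀, C > 0, and u is bounded together with u'. Then there exist constants a₁, b₁ ∈ ℝ such that for any c₁ ∈ (0, c₀), u(x) = a₁ + b₁ x + O(e^{-c₁ x}) as x → +∞. -/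
open Filter

lemma decay_lemma (a c M : ℝ) (hc : 0 < c) (hM : 0 ≤ M) (h : ℝ → ℝ)
    (hd : ∀ x ≥ a, DifferentiableAt ℝ h x)
    (hb : ∀ x ≥ a, |deriv h x| ≤ M * Real.exp (-c * x)) :
    ∃ L, ∀ x ≥ a, |h x - L| ≤ (M / c) * Real.exp (-c * x) := by
  set E : ℝ → ℝ := fun x => (M / c) * Real.exp (-c * x) with hE
  have hEd : ∀ x : ℝ, HasDerivAt E (-(M * Real.exp (-c * x))) x := by
    intro x
    have h1 : HasDerivAt (fun x : ℝ => -c * x) (-c) x := by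
      simpa using (hasDerivAt_id x).const_mul (-c)
    have h2 := (h1.exp).const_mul (M / c)
    refine h2.congr_deriv ?_
    field_simp
  have hEpos : ∀ x : ℝ, 0 ≤ E x := fun x =>
    mul_nonneg (div_nonneg hM hc.le) (Real.exp_pos _).le
  set φ : ℝ → ℝ := fun x => h x + E x with hφ
  set ψ : ℝ → ℝ := fun x => h x - E x with hψ
  have hφd : ∀ x ≥ a, HasDerivAt φ (deriv h x - M * Real.exp (-c * x)) x := by
    intro x hx
    exact ((hd x hx).hasDerivAt.add (hEd x)).congr_deriv (by ring)
  have hψd : ∀ x ≥ a, HasDerivAt ψ (deriv h x + M * Real.exp (-c * x)) x := by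
    intro x hx
    exact ((hd x hx).hasDerivAt.sub (hEd x)).congr_deriv (by ring)
  have hφanti : AntitoneOn φ (Set.Ici a) := by
    apply antitoneOn_of_deriv_nonpos (convex_Ici a)
    · exact fun x hx => ((hφd x hx).differentiableAt).continuousAt.continuousWithinAt
    · rw [interior_Ici]
      exact fun x hx => ((hφd x (le_of_lt hx)).differentiableAt).differentiableWithinAt
    · rw [interior_Ici]
      intro x hx
      rw [(hφd x (le_of_lt hx)).deriv]
      have := hb x (le_of_lt hx)
      have h1 : deriv h x ≤ M * Real.exp (-c * x) := (abs_le.mp this).2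
      linarith
  have hψmono : MonotoneOn ψ (Set.Ici a) := by
    apply monotoneOn_of_deriv_nonneg (convex_Ici a)
    · exact fun x hx => ((hψd x hx).differentiableAt).continuousAt.continuousWithinAt
    · rw [interior_Ici]
      exact fun x hx => ((hψd x (le_of_lt hx)).differentiableAt).differentiableWithinAt
    · rw [interior_Ici]
      intro x hx
      rw [(hψd x (le_of_lt hx)).deriv]
      have := hb x (le_of_lt hx)
      have h1 : -(M * Real.exp (-c * x)) ≤ deriv h x := (abs_le.mp this).1
      linarith
  -- φ tilde
  set φt : ℝ → ℝ := fun x => φ (max x a) with hφt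
  have hφt_anti : Antitone φt := by
    intro x y hxy
    exact hφanti (Set.mem_Ici.mpr (le_max_right x a)) (Set.mem_Ici.mpr (le_max_right y a))
      (max_le_max hxy le_rfl)
  have hφt_bdd : BddBelow (Set.range φt) := by
    refine ⟨ψ a, ?_⟩
    rintro z ⟨x, rfl⟩
    have h1 : ψ a ≤ ψ (max x a) :=
      hψmono (Set.mem_Ici.mpr le_rfl) (Set.mem_Ici.mpr (le_max_right x a)) (le_max_right x a)
    have h2 : ψ (max x a) ≤ φ (max x a) := by
      simp only [hψ, hφ]
      have := hEpos (max x a)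
      linarith
    exact le_trans h1 h2
  have hφt_tendsto : Tendsto φt atTop (nhds (⨅ i, φt i)) :=
    tendsto_atTop_ciInf hφt_anti hφt_bdd
  have hφ_tendsto : Tendsto φ atTop (nhds (⨅ i, φt i)) := by
    apply hφt_tendsto.congr'
    filter_upwards [eventually_ge_atTop a] with x hx
    simp [hφt, max_eq_left hx]
  have hE_tendsto : Tendsto E atTop (nhds 0) := by
    have hct : Tendsto (fun x : ℝ => c * x) atTop atTop := tendsto_id.const_mul_atTop hc
    have h1 : Tendsto (fun x : ℝ => -c * x) atTop atBot := by
      have := tendsto_neg_atTop_atBot.comp hct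
      simpa [Function.comp_def, neg_mul] using this
    have := Real.tendsto_exp_atBot.comp h1
    have h2 : Tendsto (fun x => Real.exp (-c * x)) atTop (nhds 0) := this
    simpa [hE] using h2.const_mul (M / c)
  set L : ℝ := ⨅ i, φt i with hL
  have hh_tendsto : Tendsto h atTop (nhds L) := by
    have := hφ_tendsto.sub hE_tendsto
    simpa [hφ] using this
  refine ⟨L, fun x hx => ?_⟩
  rw [abs_sub_comm, abs_le]
  constructor
  · -- L - h x ≥ -(M/c) exp, i.e. h y - h x ≥ -E x eventually
    have key : ∀ y ≥ x, h x - E x ≤ h y := by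
      intro y hy
      have := hψmono (Set.mem_Ici.mpr hx) (Set.mem_Ici.mpr (le_trans hx hy)) hy
      simp only [hψ] at this
      have := hEpos y
      linarith
    have : h x - E x ≤ L :=
      ge_of_tendsto hh_tendsto (by filter_upwards [eventually_ge_atTop x] with y hy using key y hy)
    simp only [hE] at this ⊢
    linarith
  · have key : ∀ y ≥ x, h y ≤ h x + E x := by
      intro y hy
      have := hφanti (Set.mem_Ici.mpr hx) (Set.mem_Ici.mpr (le_trans hx hy)) hy
      simp only [hφ] at this
      have := hEpos y
      linarith
    have : L ≤ h x + E x :=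
      le_of_tendsto hh_tendsto (by filter_upwards [eventually_ge_atTop x] with y hy using key y hy)
    simp only [hE] at this ⊢
    linarith

theorem stmt_13 (x₀ c₀ C : ℝ) (hc₀ : 0 < c₀) (hC : 0 < C)
    (u q f : ℝ → ℝ)
    (hu : ContDiffOn ℝ 2 u (Set.Ici x₀))
    (hq : ∀ x ≥ x₀, |q x| ≤ C * Real.exp (-c₀ * x))
    (heq : ∀ x ≥ x₀, -(deriv (deriv u) x) + q x * u x = f x)
    (hf : ∀ x ≥ x₀, |f x| ≤ C * Real.exp (-c₀ * x))
    (hub : ∃ B, ∀ x ≥ x₀, |u x| ≤ B)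
    (hub' : ∃ B, ∀ x ≥ x₀, |deriv u x| ≤ B) :
    ∃ a₁ b₁ : ℝ, ∀ c₁, 0 < c₁ → c₁ < c₀ →
      ∃ C₁ x₁ : ℝ, ∀ x ≥ x₁, |u x - (a₁ + b₁ * x)| ≤ C₁ * Real.exp (-c₁ * x) := by
  obtain ⟨B, hB⟩ := hub
  have hB0 : 0 ≤ B := le_trans (abs_nonneg _) (hB x₀ le_rfl)
  set M : ℝ := C * (B + 1) with hM
  have hM0 : 0 ≤ M := mul_nonneg hC.le (by linarith)
  -- differentiability on Ioi x₀
  have hu1 : ContDiffOn ℝ 2 u (Set.Ioi x₀) := hu.mono Set.Ioi_subset_Ici_self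
  have hu' : ContDiffOn ℝ 1 (deriv u) (Set.Ioi x₀) := by
    exact hu1.deriv_of_isOpen isOpen_Ioi (by norm_num)
  have hdu : ∀ x ∈ Set.Ioi x₀, DifferentiableAt ℝ u x := fun x hx =>
    (hu1.differentiableOn (by norm_num)).differentiableAt (isOpen_Ioi.mem_nhds hx)
  have hdu' : ∀ x ∈ Set.Ioi x₀, DifferentiableAt ℝ (deriv u) x := fun x hx =>
    (hu'.differentiableOn (by norm_num)).differentiableAt (isOpen_Ioi.mem_nhds hx)
  -- bound on second derivative
  have hdd : ∀ x ≥ x₀, |deriv (deriv u) x| ≤ M * Real.exp (-c₀ * x) := by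
    intro x hx
    have h1 : deriv (deriv u) x = q x * u x - f x := by linarith [heq x hx]
    rw [h1]
    have h2 : |q x * u x - f x| ≤ |q x| * |u x| + |f x| := by
      calc |q x * u x - f x| ≤ |q x * u x| + |f x| := abs_sub _ _
        _ = |q x| * |u x| + |f x| := by rw [abs_mul]
    have h3 : |q x| * |u x| ≤ (C * Real.exp (-c₀ * x)) * B :=
      mul_le_mul (hq x hx) (hB x hx) (abs_nonneg _)
        (mul_nonneg hC.le (Real.exp_pos _).le)
    have h4 := hf x hx
    rw [hM]
    nlinarith [Real.exp_pos (-c₀ * x)]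
  -- first application: deriv u → b₁
  obtain ⟨b₁, hb₁⟩ := decay_lemma (x₀ + 1) c₀ M hc₀ hM0 (deriv u)
    (fun x hx => hdu' x (by simp only [Set.mem_Ioi]; linarith))
    (fun x hx => hdd x (by linarith))
  -- second application: u - b₁ x → a₁
  have hdu2 : ∀ x ≥ x₀ + 1, DifferentiableAt ℝ (fun y => u y - b₁ * y) x := by
    intro x hx
    exact (hdu x (by simp only [Set.mem_Ioi]; linarith)).sub
      ((differentiableAt_id.const_mul b₁))
  have hderiv2 : ∀ x ≥ x₀ + 1, deriv (fun y => u y - b₁ * y) x = deriv u x - b₁ := by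
    intro x hx
    have h1 : HasDerivAt (fun y => u y - b₁ * y) (deriv u x - b₁ * 1) x :=
      ((hdu x (by simp only [Set.mem_Ioi]; linarith)).hasDerivAt).sub
        ((hasDerivAt_id x).const_mul b₁)
    simpa using h1.deriv
  obtain ⟨a₁, ha₁⟩ := decay_lemma (x₀ + 1) c₀ (M / c₀) hc₀ (div_nonneg hM0 hc₀.le)
    (fun y => u y - b₁ * y) hdu2
    (fun x hx => by rw [hderiv2 x hx]; exact hb₁ x hx)
  refine ⟨a₁, b₁, fun c₁ hc₁ hc₁' => ⟨M / c₀ / c₀, max (x₀ + 1) 0, fun x hx => ?_⟩⟩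
  have hx1 : x ≥ x₀ + 1 := le_trans (le_max_left _ _) hx
  have hx0 : 0 ≤ x := le_trans (le_max_right _ _) hx
  have h1 := ha₁ x hx1
  have h2 : |u x - (a₁ + b₁ * x)| = |u x - b₁ * x - a₁| := by ring_nf
  rw [h2]
  refine le_trans h1 ?_
  apply mul_le_mul_of_nonneg_left _ (div_nonneg (div_nonneg hM0 hc₀.le) hc₀.le)
  exact Real.exp_le_exp.mpr (by nlinarith)
end

section
/- Let φ ∈ C²[0, ∞) be bounded and satisfy -φ'' + (3 U² - 1) φ = 0 on (0, ∞), where U(z) = tanh(z/√2). If φ(0) = 0, then φ ≡ 0. -/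
open Real Set

noncomputable def psi18 (z : ℝ) : ℝ := ((Real.cosh (z / Real.sqrt 2)) ^ 2)⁻¹

noncomputable def psid18 (z : ℝ) : ℝ :=
  -(2 * Real.cosh (z / Real.sqrt 2) * (Real.sinh (z / Real.sqrt 2) * (1 / Real.sqrt 2))) /
    ((Real.cosh (z / Real.sqrt 2)) ^ 2) ^ 2

lemma cosh18_ne (z : ℝ) : Real.cosh (z / Real.sqrt 2) ≠ 0 := (Real.cosh_pos _).ne'

lemma hasDerivAt_cosh18 (z : ℝ) :
    HasDerivAt (fun z => Real.cosh (z / Real.sqrt 2))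
      (Real.sinh (z / Real.sqrt 2) * (1 / Real.sqrt 2)) z :=
  (Real.hasDerivAt_cosh _).comp z ((hasDerivAt_id z).div_const _)

lemma hasDerivAt_psi18 (z : ℝ) : HasDerivAt psi18 (psid18 z) z :=
  (((hasDerivAt_cosh18 z).pow 2)).inv (pow_ne_zero 2 (cosh18_ne z)) |>.congr_deriv (by
    unfold psid18; simp only [Pi.pow_apply]; ring)

lemma hasDerivAt_sinh18 (z : ℝ) :
    HasDerivAt (fun z => Real.sinh (z / Real.sqrt 2))
      (Real.cosh (z / Real.sqrt 2) * (1 / Real.sqrt 2)) z :=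
  (Real.hasDerivAt_sinh _).comp z ((hasDerivAt_id z).div_const _)

lemma hasDerivAt_psid18 (z : ℝ) :
    HasDerivAt psid18 ((3 * (Real.tanh (z / Real.sqrt 2))^2 - 1) * psi18 z) z := by
  have hc := hasDerivAt_cosh18 z
  have hs := hasDerivAt_sinh18 z
  have hN := (((hc.const_mul 2)).mul (hs.mul_const (1 / Real.sqrt 2))).neg
  have hD := (hc.pow 2).pow 2
  have h := hN.div hD (pow_ne_zero 2 (pow_ne_zero 2 (cosh18_ne z)))
  refine h.congr_deriv ?_
  simp only [Pi.pow_apply, Pi.neg_apply, Pi.mul_apply, Nat.cast_ofNat, Nat.add_one_sub_one, pow_one]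
  have h2 : (Real.sqrt 2) ^ 2 = 2 := Real.sq_sqrt (by norm_num)
  have h2' : (Real.sqrt 2) ≠ 0 := by positivity
  have hsq : Real.sinh (z / Real.sqrt 2) ^ 2 = Real.cosh (z / Real.sqrt 2) ^ 2 - 1 :=
    Real.sinh_sq _
  rw [Real.tanh_eq_sinh_div_cosh]
  unfold psi18
  field_simp
  nlinarith [hsq, h2, Real.cosh_pos (z / Real.sqrt 2), sq_nonneg (Real.cosh (z/Real.sqrt 2))]
lemma psi18_pos (z : ℝ) : 0 < psi18 z := by
  unfold psi18; positivity

lemma psi18_le_one (z : ℝ) : psi18 z ≤ 1 := by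
  unfold psi18
  rw [inv_le_one_iff₀]
  right
  nlinarith [Real.one_le_cosh (z / Real.sqrt 2)]

lemma cosh_le_exp18 (x : ℝ) (hx : 0 ≤ x) : Real.cosh x ≤ Real.exp x := by
  rw [Real.cosh_eq]
  have := Real.exp_le_exp.2 (neg_le_self hx)
  linarith

lemma exp_half_le_cosh18 (x : ℝ) : Real.exp x / 2 ≤ Real.cosh x := by
  rw [Real.cosh_eq]; linarith [(Real.exp_pos (-x)).le]

lemma aux18 (g : ℝ → ℝ) (c B : ℝ) (hc : 0 < c) (hB : 0 ≤ B)
    (hg : ∀ z > (0:ℝ), HasDerivAt g (c * Real.cosh (z / Real.sqrt 2) ^ 4) z)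
    (hbd : ∀ z ≥ (1:ℝ), g z * psi18 z ≤ B) : False := by
  have h2' : (0:ℝ) < Real.sqrt 2 := by positivity
  have h2sq : Real.sqrt 2 * Real.sqrt 2 = 2 := Real.mul_self_sqrt (by norm_num)
  have hcont : ∀ a : ℝ, 1 ≤ a → ContinuousOn g (Set.Ici a) := fun a ha x hx =>
    ((hg x (by linarith [mem_Ici.1 hx])).continuousAt).continuousWithinAt
  have hdiff : ∀ a : ℝ, 1 ≤ a → DifferentiableOn ℝ g (interior (Set.Ici a)) := by
    intro a ha x hx
    rw [interior_Ici] at hx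
    exact ((hg x (by linarith [mem_Ioi.1 hx])).differentiableAt).differentiableWithinAt
  have hderiv : ∀ x > (0:ℝ), deriv g x = c * Real.cosh (x / Real.sqrt 2) ^ 4 :=
    fun x hx => (hg x hx).deriv
  have key : ∀ a : ℝ, 1 ≤ a → ∀ y, a ≤ y →
      c * Real.cosh (a / Real.sqrt 2) ^ 4 * (y - a) ≤ g y - g a := by
    intro a ha y hy
    refine (convex_Ici a).mul_sub_le_image_sub_of_le_deriv (hcont a ha) (hdiff a ha)
      ?_ a self_mem_Ici y hy hy
    intro x hx
    rw [interior_Ici] at hx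
    have hx' : (0:ℝ) < x := by linarith [mem_Ioi.1 hx]
    rw [hderiv x hx']
    have hmono : Real.cosh (a / Real.sqrt 2) ≤ Real.cosh (x / Real.sqrt 2) := by
      rw [Real.cosh_le_cosh, abs_of_nonneg (by positivity),
        abs_of_nonneg (by positivity : (0:ℝ) ≤ x / Real.sqrt 2)]
      gcongr
      exact (mem_Ioi.1 hx).le
    have h1 : (0:ℝ) < Real.cosh (a / Real.sqrt 2) := Real.cosh_pos _
    have hp := pow_le_pow_left₀ h1.le hmono 4
    nlinarith
  set K : ℝ := 16 * Real.exp ((1:ℝ) / Real.sqrt 2) ^ 2 * (B + |g 1| + 1) / c with hK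
  have hKpos : 0 < K := by
    apply div_pos _ hc
    have : 0 < B + |g 1| + 1 := by positivity
    positivity
  set a : ℝ := max 1 (Real.log K / Real.sqrt 2) with ha
  have ha1 : (1:ℝ) ≤ a := le_max_left _ _
  have haK : K ≤ Real.exp (a / Real.sqrt 2) ^ 2 := by
    have h1 : Real.log K / Real.sqrt 2 ≤ a := le_max_right _ _
    have h2 : Real.log K / 2 ≤ a / Real.sqrt 2 := by
      rw [div_le_div_iff₀ (by norm_num) h2']
      have hmul := mul_le_mul_of_nonneg_right h1 h2'.le
      rw [div_mul_cancel₀ _ h2'.ne'] at hmul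
      nlinarith [mul_le_mul_of_nonneg_right hmul h2'.le]
    calc K = Real.exp (Real.log K / 2) ^ 2 := by
          rw [pow_two, ← Real.exp_add, add_halves, Real.exp_log hKpos]
      _ ≤ Real.exp (a / Real.sqrt 2) ^ 2 :=
          pow_le_pow_left₀ (Real.exp_pos _).le (Real.exp_le_exp.2 h2) 2
  have hg1 : 0 ≤ g a - g 1 := by
    have hk := key 1 le_rfl a ha1
    have : (0:ℝ) ≤ c * Real.cosh (1 / Real.sqrt 2) ^ 4 * (a - 1) :=
      mul_nonneg (mul_nonneg hc.le (pow_pos (Real.cosh_pos _) 4).le) (by linarith)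
    linarith
  have hga : c * Real.cosh (a / Real.sqrt 2) ^ 4 ≤ g (a+1) - g a := by
    have := key a ha1 (a+1) (by linarith)
    simpa using this
  have hgsum : g 1 + c * Real.cosh (a / Real.sqrt 2) ^ 4 ≤ g (a+1) := by linarith
  have hE : Real.exp (a / Real.sqrt 2) / 2 ≤ Real.cosh (a / Real.sqrt 2) :=
    exp_half_le_cosh18 _
  have hF : Real.cosh ((a+1) / Real.sqrt 2) ≤
      Real.exp (a / Real.sqrt 2) * Real.exp (1 / Real.sqrt 2) := by
    rw [← Real.exp_add, ← add_div]
    exact cosh_le_exp18 _ (by positivity)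
  have hpsilow : ((Real.exp (a / Real.sqrt 2) * Real.exp ((1:ℝ) / Real.sqrt 2)) ^ 2)⁻¹ ≤
      psi18 (a+1) := by
    unfold psi18
    apply inv_anti₀
    · positivity
    · nlinarith [Real.cosh_pos ((a+1)/Real.sqrt 2), hF]
  have hBle := hbd (a+1) (by linarith)
  have hpsipos := psi18_pos (a+1)
  have hpsile := psi18_le_one (a+1)
  have hlow : -|g 1| + c * Real.cosh (a / Real.sqrt 2) ^ 4 * psi18 (a+1) ≤
      g (a+1) * psi18 (a+1) := by
    have h1 : g 1 * psi18 (a+1) ≥ -|g 1| := by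
      have := neg_abs_le (g 1)
      nlinarith [abs_nonneg (g 1)]
    nlinarith [pow_pos (Real.cosh_pos (a / Real.sqrt 2)) 4]
  have hcore : B + |g 1| + 1 ≤ c * Real.cosh (a / Real.sqrt 2) ^ 4 * psi18 (a+1) := by
    have hinvpos : (0:ℝ) <
        ((Real.exp (a / Real.sqrt 2) * Real.exp ((1:ℝ) / Real.sqrt 2)) ^ 2)⁻¹ := by positivity
    have h4 : (Real.exp (a / Real.sqrt 2) / 2) ^ 4 ≤ Real.cosh (a / Real.sqrt 2) ^ 4 :=
      pow_le_pow_left₀ (by positivity) hE 4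
    have e1 : c * (Real.exp (a / Real.sqrt 2) / 2) ^ 4 *
        ((Real.exp (a / Real.sqrt 2) * Real.exp ((1:ℝ) / Real.sqrt 2)) ^ 2)⁻¹ ≤
        c * Real.cosh (a / Real.sqrt 2) ^ 4 * psi18 (a+1) :=
      mul_le_mul (mul_le_mul_of_nonneg_left h4 hc.le) hpsilow hinvpos.le (by positivity)
    have e2 : c * (Real.exp (a / Real.sqrt 2) / 2) ^ 4 *
        ((Real.exp (a / Real.sqrt 2) * Real.exp ((1:ℝ) / Real.sqrt 2)) ^ 2)⁻¹ =
        c * Real.exp (a / Real.sqrt 2) ^ 2 / (16 * Real.exp ((1:ℝ) / Real.sqrt 2) ^ 2) := by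
      field_simp
      ring
    have hck : c * K = 16 * Real.exp ((1:ℝ) / Real.sqrt 2) ^ 2 * (B + |g 1| + 1) := by
      rw [hK]; field_simp
    have e3 : B + |g 1| + 1 ≤
        c * Real.exp (a / Real.sqrt 2) ^ 2 / (16 * Real.exp ((1:ℝ) / Real.sqrt 2) ^ 2) := by
      rw [le_div_iff₀ (by positivity)]
      have h5 : c * K ≤ c * Real.exp (a / Real.sqrt 2) ^ 2 :=
        mul_le_mul_of_nonneg_left haK hc.le
      nlinarith
    linarith [e2 ▸ e1]
  linarith
lemma psi18_zero : psi18 0 = 1 := by simp [psi18]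

lemma psi18_cont : Continuous psi18 :=
  continuous_iff_continuousAt.2 fun z => (hasDerivAt_psi18 z).continuousAt

lemma psi18_sq_inv (z : ℝ) : ((psi18 z) ^ 2)⁻¹ = Real.cosh (z / Real.sqrt 2) ^ 4 := by
  unfold psi18
  rw [← inv_pow, inv_inv, ← pow_mul]

theorem stmt_18 (φ : ℝ → ℝ)
    (hφ : ContDiffOn ℝ 2 φ (Set.Ici 0))
    (hbdd : ∃ B, ∀ z ≥ (0:ℝ), |φ z| ≤ B)
    (heq : ∀ z > (0:ℝ),
      -(deriv (deriv φ) z) + (3 * (Real.tanh (z / Real.sqrt 2))^2 - 1) * φ z = 0)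
    (h0 : φ 0 = 0) :
    ∀ z ≥ (0:ℝ), φ z = 0 := by
  obtain ⟨B, hB⟩ := hbdd
  have hB0 : 0 ≤ B := le_trans (abs_nonneg _) (hB 0 le_rfl)
  have hopen : IsOpen (Set.Ioi (0:ℝ)) := isOpen_Ioi
  have hφO : ContDiffOn ℝ 2 φ (Set.Ioi 0) := hφ.mono Set.Ioi_subset_Ici_self
  have hφ' : ∀ z ∈ Set.Ioi (0:ℝ), HasDerivAt φ (deriv φ z) z := fun z hz =>
    (((hφO.differentiableOn (by norm_num)).differentiableAt (hopen.mem_nhds hz))).hasDerivAt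
  have hdφ : ContDiffOn ℝ 1 (deriv φ) (Set.Ioi 0) :=
    hφO.deriv_of_isOpen hopen (by norm_num)
  have hφ'' : ∀ z ∈ Set.Ioi (0:ℝ), HasDerivAt (deriv φ) (deriv (deriv φ) z) z := fun z hz =>
    (((hdφ.differentiableOn (by norm_num)).differentiableAt (hopen.mem_nhds hz))).hasDerivAt
  set W : ℝ → ℝ := fun z => deriv φ z * psi18 z - φ z * psid18 z with hWdef
  have hW0 : ∀ z ∈ Set.Ioi (0:ℝ), HasDerivAt W 0 z := by
    intro z hz
    have h1 := (hφ'' z hz).mul (hasDerivAt_psi18 z)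
    have h2 := (hφ' z hz).mul (hasDerivAt_psid18 z)
    refine (h1.sub h2).congr_deriv ?_
    have hq := heq z hz
    have hD2 : deriv (deriv φ) z = (3 * (Real.tanh (z / Real.sqrt 2))^2 - 1) * φ z := by
      linarith
    rw [hD2]; ring
  have hWc : ∀ p q : ℝ, 0 < p → p ≤ q → W q = W p := by
    intro p q hp hpq
    have hco : ContinuousOn W (Set.Icc p q) := fun t ht =>
      ((hW0 t (by exact lt_of_lt_of_le hp ht.1)).continuousAt).continuousWithinAt
    exact constant_of_has_deriv_right_zero hco
      (fun t ht => (hW0 t (lt_of_lt_of_le hp ht.1)).hasDerivWithinAt) q (Set.right_mem_Icc.2 hpq)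
  set c := W 1 with hc1
  have hWz : ∀ z > (0:ℝ), W z = c := by
    intro z hz
    rcases le_total z 1 with h | h
    · exact (hWc z 1 hz h).symm
    · exact hWc 1 z one_pos h
  set g : ℝ → ℝ := fun z => φ z * (psi18 z)⁻¹ with hgdef
  have hgd : ∀ z ∈ Set.Ioi (0:ℝ), HasDerivAt g (c * Real.cosh (z / Real.sqrt 2) ^ 4) z := by
    intro z hz
    have hne := (psi18_pos z).ne'
    have h1 := (hφ' z hz).mul ((hasDerivAt_psi18 z).inv hne)
    refine h1.congr_deriv ?_
    have : deriv φ z * (psi18 z)⁻¹ + φ z * (-psid18 z / psi18 z ^ 2) =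
        W z * ((psi18 z) ^ 2)⁻¹ := by
      rw [hWdef]
      field_simp
      ring
    rw [Pi.inv_apply, this, hWz z hz, psi18_sq_inv]
  have hgmul : ∀ z > (0:ℝ), g z * psi18 z = φ z := by
    intro z hz
    rw [hgdef]
    field_simp
    exact mul_div_cancel_right₀ _ (psi18_pos z).ne'
  rcases eq_or_ne c 0 with hc0 | hc0
  · -- c = 0 : g constant
    have hgc : ∀ p q : ℝ, 0 < p → p ≤ q → g q = g p := by
      intro p q hp hpq
      have hco : ContinuousOn g (Set.Icc p q) := fun t ht =>
        ((hgd t (lt_of_lt_of_le hp ht.1)).continuousAt).continuousWithinAt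
      refine constant_of_has_deriv_right_zero hco
        (fun t ht => ?_) q (Set.right_mem_Icc.2 hpq)
      have := (hgd t (lt_of_lt_of_le hp ht.1)).hasDerivWithinAt (s := Set.Ici t)
      rwa [hc0, zero_mul] at this
    set a := g 1 with hadef
    have hφeq : ∀ z > (0:ℝ), φ z = a * psi18 z := by
      intro z hz
      have hgz : g z = a := by
        rcases le_total z 1 with h | h
        · exact (hgc z 1 hz h).symm
        · exact hgc 1 z one_pos h
      rw [← hgmul z hz, hgz]
    have ha0 : a = 0 := by
      have ht1 : Filter.Tendsto φ (nhdsWithin 0 (Set.Ioi 0)) (nhds 0) := by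
        have h := ((hφ.continuousOn.continuousWithinAt (Set.self_mem_Ici)).mono
          Set.Ioi_subset_Ici_self).tendsto
        rwa [h0] at h
      have ht2 : Filter.Tendsto (fun z => a * psi18 z) (nhdsWithin 0 (Set.Ioi 0))
          (nhds (a * psi18 0)) :=
        ((continuous_const.mul psi18_cont).continuousAt).continuousWithinAt
      have ht3 : Filter.Tendsto φ (nhdsWithin 0 (Set.Ioi 0)) (nhds (a * psi18 0)) := by
        refine ht2.congr' ?_
        filter_upwards [eventually_mem_nhdsWithin] with x hx
        exact (hφeq x hx).symm
      have := tendsto_nhds_unique ht1 ht3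
      rw [psi18_zero, mul_one] at this
      exact this.symm
    intro z hz
    rcases eq_or_lt_of_le hz with h | h
    · rw [← h]; exact h0
    · rw [hφeq z h, ha0, zero_mul]
  · -- c ≠ 0 : growth contradiction
    exfalso
    rcases hc0.lt_or_gt with hneg | hpos
    · refine aux18 (fun z => -g z) (-c) B (by linarith) hB0 (fun z hz => ?_) (fun z hz => ?_)
      · have := (hgd z hz).neg
        refine this.congr_deriv ?_
        ring
      · have h1 : (0:ℝ) < z := by linarith
        have := hgmul z h1
        have hb := hB z (by linarith)
        have : -g z * psi18 z = -φ z := by rw [← this]; ring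
        rw [this]
        cases' abs_le.1 hb with h2 h3
        linarith
    · refine aux18 g c B hpos hB0 (fun z hz => hgd z hz) (fun z hz => ?_)
      have h1 : (0:ℝ) < z := by linarith
      rw [hgmul z h1]
      cases' abs_le.1 (hB z (by linarith)) with h2 h3
      exact h3
end

section
/- Let v₁, v₂ : ℝ → ℝ be positive C² solutions of -v₁'' + v₁³ - v₁ + Λ v₂² v₁ = 0, -v₂'' + v₂³ - v₂ + Λ v₁² v₂ = 0 with Λ > 1, satisfying (v₁, v₂) → (0,1) at -∞ and (1,0) at +∞, with derivatives tending to 0 at ±∞. If v₁'(z) > 0 for all z, and there exist sequences zₙ± → ±∞ with v₂'(zₙ±) < 0, then v₂'(z) < 0 for all z ∈ ℝ. (Key computation: σ = v₂'/v₂ satisfies (v₂² σ')' = v₂² σ'' + 2 v₂ v₂' σ' and, using the equations and v₁' > 0, one gets (v₂² σ')' > 2 v₂⁴ σ, so σ cannot attain a nonnegative interior maximum, forcing σ < 0 on each [zₙ⁻, zₙ⁺].) -/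
open Filter Set

theorem stmt_19 (Λ : ℝ) (hΛ : 1 < Λ) (v₁ v₂ : ℝ → ℝ)
    (hv₁ : ContDiff ℝ 2 v₁) (hv₂ : ContDiff ℝ 2 v₂)
    (hpos₁ : ∀ z, 0 < v₁ z) (hpos₂ : ∀ z, 0 < v₂ z)
    (heq₁ : ∀ z, -(deriv (deriv v₁) z) + (v₁ z)^3 - v₁ z + Λ * (v₂ z)^2 * v₁ z = 0)
    (heq₂ : ∀ z, -(deriv (deriv v₂) z) + (v₂ z)^3 - v₂ z + Λ * (v₁ z)^2 * v₂ z = 0)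
    (hbot₁ : Tendsto v₁ atBot (nhds 0)) (hbot₂ : Tendsto v₂ atBot (nhds 1))
    (htop₁ : Tendsto v₁ atTop (nhds 1)) (htop₂ : Tendsto v₂ atTop (nhds 0))
    (hdbot₁ : Tendsto (deriv v₁) atBot (nhds 0)) (hdbot₂ : Tendsto (deriv v₂) atBot (nhds 0))
    (hdtop₁ : Tendsto (deriv v₁) atTop (nhds 0)) (hdtop₂ : Tendsto (deriv v₂) atTop (nhds 0))
    (hmono₁ : ∀ z, 0 < deriv v₁ z)
    (zp zm : ℕ → ℝ)
    (hzp : Tendsto zp atTop atTop) (hzm : Tendsto zm atTop atBot)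
    (hseq : ∀ n, deriv v₂ (zp n) < 0 ∧ deriv v₂ (zm n) < 0) :
    ∀ z, deriv v₂ z < 0 := by
  -- basic differentiability facts
  have hd₁ : Differentiable ℝ v₁ := hv₁.differentiable (by norm_num)
  have hd₂ : Differentiable ℝ v₂ := hv₂.differentiable (by norm_num)
  have hv₂' : ContDiff ℝ 1 (deriv v₂) := by
    have : ContDiff ℝ (1+1) v₂ := by exact_mod_cast hv₂
    exact (contDiff_succ_iff_deriv.mp this).2.2
  have hv₁' : ContDiff ℝ 1 (deriv v₁) := by
    have : ContDiff ℝ (1+1) v₁ := by exact_mod_cast hv₁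
    exact (contDiff_succ_iff_deriv.mp this).2.2
  have hdd₂ : Differentiable ℝ (deriv v₂) := hv₂'.differentiable (by norm_num)
  have hc₁ : Continuous v₁ := hd₁.continuous
  have hc₂ : Continuous v₂ := hd₂.continuous
  have hc₁' : Continuous (deriv v₁) := hv₁'.continuous
  have hc₂' : Continuous (deriv v₂) := hv₂'.continuous
  -- formula for v₂''
  have h2f : ∀ z, deriv (deriv v₂) z = (v₂ z)^3 - v₂ z + Λ * (v₁ z)^2 * v₂ z := by
    intro z; linarith [heq₂ z]
  -- the functions σ and w
  set σ : ℝ → ℝ := fun z => deriv v₂ z / v₂ z with hσdef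
  set w : ℝ → ℝ := fun z => deriv (deriv v₂) z * v₂ z - (deriv v₂ z)^2 with hwdef
  have hσ : ∀ z, HasDerivAt σ (w z / (v₂ z)^2) z := by
    intro z
    have h1 : HasDerivAt (deriv v₂) (deriv (deriv v₂) z) z := (hdd₂ z).hasDerivAt
    have h2 : HasDerivAt v₂ (deriv v₂ z) z := (hd₂ z).hasDerivAt
    have := h1.div h2 (ne_of_gt (hpos₂ z))
    refine this.congr_deriv ?_
    simp only [hwdef]; ring
  have hσcont : Continuous σ := hc₂'.div hc₂ (fun z => ne_of_gt (hpos₂ z))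
  -- derivative of w
  set g : ℝ → ℝ := fun z => 2*(v₂ z)^3*(deriv v₂ z) + 2*Λ*(v₁ z)*(deriv v₁ z)*(v₂ z)^2
    with hgdef
  have hweq : w = fun z => ((v₂ z)^3 - v₂ z + Λ * (v₁ z)^2 * v₂ z) * v₂ z - (deriv v₂ z)^2 := by
    funext z; simp only [hwdef, h2f z]
  have hw : ∀ z, HasDerivAt w (g z) z := by
    intro z
    rw [hweq]
    have H1 : HasDerivAt v₁ (deriv v₁ z) z := (hd₁ z).hasDerivAt
    have H2 : HasDerivAt v₂ (deriv v₂ z) z := (hd₂ z).hasDerivAt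
    have H3 : HasDerivAt (deriv v₂) (deriv (deriv v₂) z) z := (hdd₂ z).hasDerivAt
    have h := ((((H2.pow 3).sub H2).add
        (((H1.pow 2).const_mul Λ).mul H2)).mul H2).sub (H3.pow 2)
    refine h.congr_deriv ?_
    rw [h2f z]
    simp only [hgdef]
    push_cast
    simp only [Pi.pow_apply, Pi.mul_apply, Pi.sub_apply, Pi.add_apply]
    ring
  have hwcont : Continuous w := by
    rw [hweq]
    continuity
  have hgcont : Continuous g := by
    simp only [hgdef]
    continuity
  -- main argument
  intro z₀
  by_contra hcon
  push_neg at hcon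
  obtain ⟨N, hN⟩ : ∃ n, zm n < z₀ := (hzm.eventually (eventually_lt_atBot z₀)).exists
  obtain ⟨M, hM⟩ : ∃ n, z₀ < zp n := (hzp.eventually (eventually_gt_atTop z₀)).exists
  set a := zm N
  set b := zp M
  have hab : a < b := hN.trans hM
  obtain ⟨c, hcmem, hmax⟩ := isCompact_Icc.exists_isMaxOn (nonempty_Icc.mpr hab.le)
    (hσcont.continuousOn (s := Icc a b))
  have hσa : σ a < 0 := div_neg_of_neg_of_pos (hseq N).2 (hpos₂ a)
  have hσb : σ b < 0 := div_neg_of_neg_of_pos (hseq M).1 (hpos₂ b)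
  have hz₀mem : z₀ ∈ Icc a b := ⟨hN.le, hM.le⟩
  have hσz₀ : 0 ≤ σ z₀ := div_nonneg hcon (hpos₂ z₀).le
  have hσc0 : 0 ≤ σ c := hσz₀.trans (hmax hz₀mem)
  have hac : a < c := lt_of_le_of_ne hcmem.1 (by rintro rfl; linarith)
  have hcb : c < b := lt_of_le_of_ne hcmem.2 (by rintro rfl; linarith)
  -- σ has a local max at c, so w c = 0
  have hloc : IsLocalMax σ c := hmax.isLocalMax (Icc_mem_nhds hac hcb)
  have hdσ0 : deriv σ c = 0 := hloc.deriv_eq_zero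
  have hw0 : w c = 0 := by
    have := (hσ c).deriv
    rw [hdσ0] at this
    have h2 : (v₂ c)^2 ≠ 0 := pow_ne_zero _ (ne_of_gt (hpos₂ c))
    field_simp at this
    exact (div_eq_zero_iff.mp this.symm).resolve_right h2
  -- g c > 0
  have hdv₂c : 0 ≤ deriv v₂ c := by
    have h := mul_nonneg hσc0 (hpos₂ c).le
    rwa [hσdef, div_mul_cancel₀ _ (ne_of_gt (hpos₂ c))] at h
  have hgc : 0 < g c := by
    have h1 : 0 < 2*Λ*(v₁ c)*(deriv v₁ c)*(v₂ c)^2 := by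
      have := hpos₁ c; have := hmono₁ c; have := hpos₂ c; positivity
    have h2 : 0 ≤ 2*(v₂ c)^3*(deriv v₂ c) := by
      have := hpos₂ c; positivity
    simp only [hgdef]; linarith
  -- g > 0 near c
  have hev : ∀ᶠ x in nhds c, 0 < g x := (hgcont.tendsto c).eventually (eventually_gt_nhds hgc)
  obtain ⟨ε, hε, hball⟩ := Metric.eventually_nhds_iff.mp hev
  set t : ℝ := min (ε/2) (b - c) with htdef
  have ht : 0 < t := lt_min (by linarith) (by linarith)
  have hctb : c + t ≤ b := by
    have : t ≤ b - c := min_le_right _ _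
    linarith
  have hgpos : ∀ x ∈ Icc c (c + t), 0 < g x := by
    intro x hx
    apply hball
    rw [Real.dist_eq, abs_of_nonneg (by linarith [hx.1])]
    have : t ≤ ε/2 := min_le_left _ _
    linarith [hx.2]
  -- w is strictly monotone on [c, c+t], hence positive on (c, c+t]
  have hwmono : StrictMonoOn w (Icc c (c + t)) := by
    apply strictMonoOn_of_deriv_pos (convex_Icc _ _) (hwcont.continuousOn)
    intro x hx
    rw [interior_Icc] at hx
    rw [(hw x).deriv]
    exact hgpos x ⟨hx.1.le, hx.2.le⟩
  have hwpos : ∀ x ∈ Ioo c (c + t), 0 < w x := by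
    intro x hx
    have := hwmono (left_mem_Icc.mpr (by linarith)) ⟨hx.1.le, hx.2.le⟩ hx.1
    rwa [hw0] at this
  -- σ is strictly monotone on [c, c+t]
  have hσmono : StrictMonoOn σ (Icc c (c + t)) := by
    apply strictMonoOn_of_deriv_pos (convex_Icc _ _) (hσcont.continuousOn)
    intro x hx
    rw [interior_Icc] at hx
    rw [(hσ x).deriv]
    exact div_pos (hwpos x hx) (pow_pos (hpos₂ x) 2)
  have hlt : σ c < σ (c + t) := hσmono (left_mem_Icc.mpr (by linarith))
    (right_mem_Icc.mpr (by linarith)) (by linarith)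
  have hle : σ (c + t) ≤ σ c := hmax ⟨by linarith [hcmem.1], hctb⟩
  linarith
end
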